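/- Let U = {(η,θ,φ) ∈ ℝ³ : η > 0}, and on U set H₁ = H₂ = (cosh η − cos θ)⁻¹ and H₃ = sinh η·(cosh η − cos θ)⁻¹, with h = H₁H₂H₃ (coordinates u¹ = η, u² = θ, u³ = φ). Let α₁, α₂ be real constants and let φ₁ : (0,∞) → ℝ, φ₂, φ₃ : ℝ → ℝ be C² functions satisfying φ₁''(η) + coth(η)·φ₁'(η) + (1/4 − α₁ − α₂/sinh²η)·φ₁(η) = 0, φ₂'' + α₁φ₂ = 0, and φ₃'' + α₂φ₃ = 0. Then the function ψ(η,θ,φ) = √(cosh η − cos θ)·φ₁(η)φ₂(θ)φ₃(φ) satisfies the Laplace equation ∑_{i=1}^{3} ∂ᵢ((h/Hᵢ²) ∂ᵢψ) = 0 on U. -/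

import Mathlib

/-- The partial derivative of `f : ℝ³ → ℝ` in the `i`-th coordinate direction,
taken as a line (directional) derivative. -/
noncomputable def pd (i : Fin 3) (f : (Fin 3 → ℝ) → ℝ) (x : Fin 3 → ℝ) : ℝ :=
  lineDeriv ℝ f x (Pi.single i 1)

lemma pd_eq_deriv_update (i : Fin 3) (f : (Fin 3 → ℝ) → ℝ) (x : Fin 3 → ℝ) :
    pd i f x = deriv (fun t => f (Function.update x i t)) (x i) := by
  unfold pd lineDeriv
  have h1 : (fun t : ℝ => f (x + t • (Pi.single i 1 : Fin 3 → ℝ)))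
      = fun t => f (Function.update x i (x i + t)) := by
    funext t; congr 1; funext j
    rcases eq_or_ne j i with rfl | hj
    · simp
    · simp [Function.update_of_ne hj, Pi.single_apply, hj]
  rw [h1]
  simpa using deriv_comp_const_add (fun t => f (Function.update x i t)) (x i) 0

set_option maxHeartbeats 2000000 in
/-- **R-separability of the toroidal metric in the 3-dimensional Laplace equation.**
With `H₁ = H₂ = (cosh η - cos θ)⁻¹`, `H₃ = sinh η (cosh η - cos θ)⁻¹`, `h = H₁H₂H₃` on
`U = {η > 0}`, every choice of `C²` solutions of
`φ₁'' + coth η φ₁' + (1/4 - α₁ - α₂/sinh²η)φ₁ = 0`, `φ₂'' + α₁φ₂ = 0`,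
`φ₃'' + α₂φ₃ = 0` yields a solution `ψ = √(cosh η - cos θ)·φ₁φ₂φ₃` of
`∑ᵢ ∂ᵢ((h/Hᵢ²)∂ᵢψ) = 0` on `U`. -/
theorem toroidal_R_separability
    (U : Set (Fin 3 → ℝ)) (hU : U = {u | 0 < u 0})
    (H : Fin 3 → (Fin 3 → ℝ) → ℝ)
    (hH0 : ∀ u, H 0 u = (Real.cosh (u 0) - Real.cos (u 1))⁻¹)
    (hH1 : ∀ u, H 1 u = (Real.cosh (u 0) - Real.cos (u 1))⁻¹)
    (hH2 : ∀ u, H 2 u = Real.sinh (u 0) * (Real.cosh (u 0) - Real.cos (u 1))⁻¹)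
    (h : (Fin 3 → ℝ) → ℝ) (hh : ∀ u, h u = H 0 u * H 1 u * H 2 u)
    (α1 α2 : ℝ)
    (φ1 φ2 φ3 : ℝ → ℝ)
    (hφ1 : ContDiffOn ℝ 2 φ1 (Set.Ioi 0)) (hφ2 : ContDiff ℝ 2 φ2)
    (hφ3 : ContDiff ℝ 2 φ3)
    (hode1 : ∀ η ∈ Set.Ioi (0 : ℝ),
      deriv (deriv φ1) η + Real.cosh η / Real.sinh η * deriv φ1 η
        + (1 / 4 - α1 - α2 / Real.sinh η ^ 2) * φ1 η = 0)
    (hode2 : ∀ x : ℝ, deriv (deriv φ2) x + α1 * φ2 x = 0)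
    (hode3 : ∀ x : ℝ, deriv (deriv φ3) x + α2 * φ3 x = 0)
    (ψ : (Fin 3 → ℝ) → ℝ)
    (hψ : ∀ u, ψ u = Real.sqrt (Real.cosh (u 0) - Real.cos (u 1)) *
      (φ1 (u 0) * φ2 (u 1) * φ3 (u 2))) :
    ∀ u ∈ U, ∑ i : Fin 3, pd i (fun v => h v / H i v ^ 2 * pd i ψ v) u = 0 := by
  intro u hu
  rw [hU] at hu
  have ha : 0 < u 0 := hu
  set a := u 0 with ha'
  set b := u 1 with hb'
  set c := u 2 with hc'
  -- basic positivity
  have hch : 1 < Real.cosh a := Real.one_lt_cosh.mpr (ne_of_gt ha)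
  have hsh : 0 < Real.sinh a := Real.sinh_pos_iff.mpr ha
  have hD1 : ∀ t : ℝ, 0 < Real.cosh a - Real.cos t := fun t => by
    have := Real.cos_le_one t; linarith
  have hD0 : ∀ t ∈ Set.Ioi (0:ℝ), 0 < Real.cosh t - Real.cos b := fun t ht => by
    have h1 : 1 < Real.cosh t := Real.one_lt_cosh.mpr (ne_of_gt ht)
    have := Real.cos_le_one b; linarith
  -- derivatives of the φ's
  have hf1 : ∀ t ∈ Set.Ioi (0:ℝ), HasDerivAt φ1 (deriv φ1 t) t := fun t ht =>
    ((hφ1.differentiableOn two_ne_zero).differentiableAt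
      (isOpen_Ioi.mem_nhds ht)).hasDerivAt
  have hf1' : ∀ t ∈ Set.Ioi (0:ℝ), HasDerivAt (deriv φ1) (deriv (deriv φ1) t) t := fun t ht =>
    (((hφ1.deriv_of_isOpen (m := 1) isOpen_Ioi (by norm_num)).differentiableOn
      one_ne_zero).differentiableAt (isOpen_Ioi.mem_nhds ht)).hasDerivAt
  have hf2 : ∀ t : ℝ, HasDerivAt φ2 (deriv φ2 t) t := fun t =>
    ((hφ2.differentiable two_ne_zero) t).hasDerivAt
  have hf2' : ∀ t : ℝ, HasDerivAt (deriv φ2) (deriv (deriv φ2) t) t := by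
    have h2 : ContDiff ℝ (1+1) φ2 := by norm_num [hφ2]
    intro t
    exact (((contDiff_succ_iff_deriv.mp h2).2.2.differentiable (by norm_num)) t).hasDerivAt
  have hf3 : ∀ t : ℝ, HasDerivAt φ3 (deriv φ3 t) t := fun t =>
    ((hφ3.differentiable two_ne_zero) t).hasDerivAt
  have hf3' : ∀ t : ℝ, HasDerivAt (deriv φ3) (deriv (deriv φ3) t) t := by
    have h2 : ContDiff ℝ (1+1) φ3 := by norm_num [hφ3]
    intro t
    exact (((contDiff_succ_iff_deriv.mp h2).2.2.differentiable (by norm_num)) t).hasDerivAt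
  -- reduction of pd of the summands to one-variable derivatives
  have key : ∀ i : Fin 3, pd i (fun v => h v / H i v ^ 2 * pd i ψ v) u
      = deriv (fun t => h (Function.update u i t) / H i (Function.update u i t) ^ 2
          * deriv (fun r => ψ (Function.update u i r)) t) (u i) := by
    intro i
    rw [pd_eq_deriv_update]
    congr 1
    funext t
    congr 1
    rw [pd_eq_deriv_update]
    simp [Function.update_idem]
  -- square root derivative facts
  have hsq0 : ∀ t ∈ Set.Ioi (0:ℝ), HasDerivAt (fun r => Real.sqrt (Real.cosh r - Real.cos b))
      (Real.sinh t / (2 * Real.sqrt (Real.cosh t - Real.cos b))) t := fun t ht =>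
    ((Real.hasDerivAt_cosh t).sub_const _).sqrt (ne_of_gt (hD0 t ht))
  have hsq1 : ∀ t : ℝ, HasDerivAt (fun r => Real.sqrt (Real.cosh a - Real.cos r))
      (Real.sin t / (2 * Real.sqrt (Real.cosh a - Real.cos t))) t := fun t => by
    have hc : HasDerivAt (fun r => Real.cosh a - Real.cos r) (Real.sin t) t := by
      simpa using (Real.hasDerivAt_cos t).const_sub (Real.cosh a)
    exact hc.sqrt (ne_of_gt (hD1 t))
  -- term 0
  have hψ0 : ∀ t ∈ Set.Ioi (0:ℝ), HasDerivAt (fun r => ψ (Function.update u 0 r))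
      (Real.sinh t / (2 * Real.sqrt (Real.cosh t - Real.cos b)) * (φ1 t * φ2 b * φ3 c)
        + Real.sqrt (Real.cosh t - Real.cos b) * (deriv φ1 t * φ2 b * φ3 c)) t := by
    intro t ht
    refine HasDerivAt.congr_of_eventuallyEq
      ((hsq0 t ht).mul (((hf1 t ht).mul_const (φ2 b)).mul_const (φ3 c)))
      (Filter.Eventually.of_forall fun r => ?_)
    simp [hψ, Function.update_apply, ← hb', ← hc']
  have E0 : (fun t => h (Function.update u 0 t) / H 0 (Function.update u 0 t) ^ 2
        * deriv (fun r => ψ (Function.update u 0 r)) t)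
      =ᶠ[nhds a] (fun t => Real.sinh t ^ 2 * (φ1 t * φ2 b * φ3 c)
          / (2 * Real.sqrt (Real.cosh t - Real.cos b) ^ 3)
        + Real.sinh t * (deriv φ1 t * φ2 b * φ3 c) / Real.sqrt (Real.cosh t - Real.cos b)) := by
    filter_upwards [Ioi_mem_nhds ha] with t ht
    rw [(hψ0 t ht).deriv, hh, hH0, hH1, hH2]
    have hDt := hD0 t ht
    have hst : 0 < Real.sqrt (Real.cosh t - Real.cos b) := Real.sqrt_pos.mpr hDt
    have hs2 : Real.sqrt (Real.cosh t - Real.cos b) ^ 2 = Real.cosh t - Real.cos b :=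
      Real.sq_sqrt hDt.le
    simp only [Function.update_apply, ← hb']
    norm_num
    set S := Real.sqrt (Real.cosh t - Real.cos b) with hS
    clear_value S
    rw [← hs2]
    field_simp
  have hd0 : HasDerivAt (fun t => Real.sinh t ^ 2 * (φ1 t * φ2 b * φ3 c)
          / (2 * Real.sqrt (Real.cosh t - Real.cos b) ^ 3)
        + Real.sinh t * (deriv φ1 t * φ2 b * φ3 c) / Real.sqrt (Real.cosh t - Real.cos b))
      (Real.sinh a * Real.cosh a * (φ1 a * φ2 b * φ3 c)
          / Real.sqrt (Real.cosh a - Real.cos b) ^ 3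
        - 3 * Real.sinh a ^ 3 * (φ1 a * φ2 b * φ3 c)
          / (4 * Real.sqrt (Real.cosh a - Real.cos b) ^ 5)
        + Real.cosh a * (deriv φ1 a * φ2 b * φ3 c) / Real.sqrt (Real.cosh a - Real.cos b)
        + Real.sinh a * (deriv (deriv φ1) a * φ2 b * φ3 c)
          / Real.sqrt (Real.cosh a - Real.cos b)) a := by
    have hDa := hD0 a ha
    have hsa : 0 < Real.sqrt (Real.cosh a - Real.cos b) := Real.sqrt_pos.mpr hDa
    have raw := ((((Real.hasDerivAt_sinh a).pow 2).mul
          (((hf1 a ha).mul_const (φ2 b)).mul_const (φ3 c))).div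
        (((hsq0 a ha).pow 3).const_mul 2)
        (mul_ne_zero two_ne_zero (pow_ne_zero 3 hsa.ne'))).add
      (((Real.hasDerivAt_sinh a).mul
          (((hf1' a ha).mul_const (φ2 b)).mul_const (φ3 c))).div
        (hsq0 a ha) hsa.ne')
    simp only [Pi.pow_apply, Pi.mul_apply] at raw
    set S := Real.sqrt (Real.cosh a - Real.cos b) with hS
    clear_value S
    refine raw.congr_deriv ?_
    field_simp
    ring
  have eq0 : pd 0 (fun v => h v / H 0 v ^ 2 * pd 0 ψ v) u
      = Real.sinh a * Real.cosh a * (φ1 a * φ2 b * φ3 c)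
          / Real.sqrt (Real.cosh a - Real.cos b) ^ 3
        - 3 * Real.sinh a ^ 3 * (φ1 a * φ2 b * φ3 c)
          / (4 * Real.sqrt (Real.cosh a - Real.cos b) ^ 5)
        + Real.cosh a * (deriv φ1 a * φ2 b * φ3 c) / Real.sqrt (Real.cosh a - Real.cos b)
        + Real.sinh a * (deriv (deriv φ1) a * φ2 b * φ3 c)
          / Real.sqrt (Real.cosh a - Real.cos b) := by
    rw [key 0, show u 0 = a from rfl, E0.deriv_eq, hd0.deriv]
  -- term 1
  have hψ1 : ∀ t : ℝ, HasDerivAt (fun r => ψ (Function.update u 1 r))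
      (Real.sin t / (2 * Real.sqrt (Real.cosh a - Real.cos t)) * (φ1 a * φ2 t * φ3 c)
        + Real.sqrt (Real.cosh a - Real.cos t) * (φ1 a * deriv φ2 t * φ3 c)) t := by
    intro t
    refine HasDerivAt.congr_of_eventuallyEq
      ((hsq1 t).mul (((hf2 t).const_mul (φ1 a)).mul_const (φ3 c)))
      (Filter.Eventually.of_forall fun r => ?_)
    simp [hψ, Function.update_apply, ← ha', ← hc']
  have E1 : (fun t => h (Function.update u 1 t) / H 1 (Function.update u 1 t) ^ 2
        * deriv (fun r => ψ (Function.update u 1 r)) t)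
      =ᶠ[nhds b] (fun t => Real.sin t * (φ1 a * φ2 t * φ3 c) * Real.sinh a
          / (2 * Real.sqrt (Real.cosh a - Real.cos t) ^ 3)
        + (φ1 a * deriv φ2 t * φ3 c) * Real.sinh a / Real.sqrt (Real.cosh a - Real.cos t)) := by
    filter_upwards [] with t
    rw [(hψ1 t).deriv, hh, hH0, hH1, hH2]
    have hDt := hD1 t
    have hst : 0 < Real.sqrt (Real.cosh a - Real.cos t) := Real.sqrt_pos.mpr hDt
    have hs2 : Real.sqrt (Real.cosh a - Real.cos t) ^ 2 = Real.cosh a - Real.cos t :=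
      Real.sq_sqrt hDt.le
    simp only [Function.update_apply, ← ha']
    norm_num
    set S := Real.sqrt (Real.cosh a - Real.cos t) with hS
    clear_value S
    rw [← hs2]
    field_simp
  have hd1 : HasDerivAt (fun t => Real.sin t * (φ1 a * φ2 t * φ3 c) * Real.sinh a
          / (2 * Real.sqrt (Real.cosh a - Real.cos t) ^ 3)
        + (φ1 a * deriv φ2 t * φ3 c) * Real.sinh a / Real.sqrt (Real.cosh a - Real.cos t))
      (Real.cos b * (φ1 a * φ2 b * φ3 c) * Real.sinh a
          / (2 * Real.sqrt (Real.cosh a - Real.cos b) ^ 3)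
        - 3 * Real.sin b ^ 2 * (φ1 a * φ2 b * φ3 c) * Real.sinh a
          / (4 * Real.sqrt (Real.cosh a - Real.cos b) ^ 5)
        + (φ1 a * deriv (deriv φ2) b * φ3 c) * Real.sinh a
          / Real.sqrt (Real.cosh a - Real.cos b)) b := by
    have hDb := hD1 b
    have hsb : 0 < Real.sqrt (Real.cosh a - Real.cos b) := Real.sqrt_pos.mpr hDb
    have raw := ((((Real.hasDerivAt_sin b).mul
          (((hf2 b).const_mul (φ1 a)).mul_const (φ3 c))).mul_const (Real.sinh a)).div
        (((hsq1 b).pow 3).const_mul 2)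
        (mul_ne_zero two_ne_zero (pow_ne_zero 3 hsb.ne'))).add
      (((((hf2' b).const_mul (φ1 a)).mul_const (φ3 c)).mul_const (Real.sinh a)).div
        (hsq1 b) hsb.ne')
    simp only [Pi.pow_apply, Pi.mul_apply] at raw
    set S := Real.sqrt (Real.cosh a - Real.cos b) with hS
    clear_value S
    refine raw.congr_deriv ?_
    field_simp
    ring
  have eq1 : pd 1 (fun v => h v / H 1 v ^ 2 * pd 1 ψ v) u
      = Real.cos b * (φ1 a * φ2 b * φ3 c) * Real.sinh a
          / (2 * Real.sqrt (Real.cosh a - Real.cos b) ^ 3)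
        - 3 * Real.sin b ^ 2 * (φ1 a * φ2 b * φ3 c) * Real.sinh a
          / (4 * Real.sqrt (Real.cosh a - Real.cos b) ^ 5)
        + (φ1 a * deriv (deriv φ2) b * φ3 c) * Real.sinh a
          / Real.sqrt (Real.cosh a - Real.cos b) := by
    rw [key 1, show u 1 = b from rfl, E1.deriv_eq, hd1.deriv]
  -- term 2
  have hψ2 : ∀ t : ℝ, HasDerivAt (fun r => ψ (Function.update u 2 r))
      (Real.sqrt (Real.cosh a - Real.cos b) * (φ1 a * φ2 b * deriv φ3 t)) t := by
    intro t
    refine HasDerivAt.congr_of_eventuallyEq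
      (((hf3 t).const_mul (φ1 a * φ2 b)).const_mul (Real.sqrt (Real.cosh a - Real.cos b)))
      (Filter.Eventually.of_forall fun r => ?_)
    simp [hψ, Function.update_apply, ← ha', ← hb']
  have E2 : (fun t => h (Function.update u 2 t) / H 2 (Function.update u 2 t) ^ 2
        * deriv (fun r => ψ (Function.update u 2 r)) t)
      =ᶠ[nhds c] (fun t => deriv φ3 t * (φ1 a * φ2 b)
          / (Real.sqrt (Real.cosh a - Real.cos b) * Real.sinh a)) := by
    filter_upwards [] with t
    rw [(hψ2 t).deriv, hh, hH0, hH1, hH2]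
    have hDb := hD1 b
    have hsb : 0 < Real.sqrt (Real.cosh a - Real.cos b) := Real.sqrt_pos.mpr hDb
    have hs2 : Real.sqrt (Real.cosh a - Real.cos b) ^ 2 = Real.cosh a - Real.cos b :=
      Real.sq_sqrt hDb.le
    simp only [Function.update_apply, ← ha', ← hb']
    norm_num [Fin.ext_iff]
    set S := Real.sqrt (Real.cosh a - Real.cos b) with hS
    clear_value S
    rw [← hs2]
    field_simp
  have hd2 : HasDerivAt (fun t => deriv φ3 t * (φ1 a * φ2 b)
        / (Real.sqrt (Real.cosh a - Real.cos b) * Real.sinh a))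
      (deriv (deriv φ3) c * (φ1 a * φ2 b)
        / (Real.sqrt (Real.cosh a - Real.cos b) * Real.sinh a)) c :=
    ((hf3' c).mul_const _).div_const _
  have eq2 : pd 2 (fun v => h v / H 2 v ^ 2 * pd 2 ψ v) u
      = deriv (deriv φ3) c * (φ1 a * φ2 b)
        / (Real.sqrt (Real.cosh a - Real.cos b) * Real.sinh a) := by
    rw [key 2, show u 2 = c from rfl, E2.deriv_eq, hd2.deriv]
  -- final algebra
  rw [Fin.sum_univ_three, eq0, eq1, eq2]
  have h2f : deriv (deriv φ1) a = -(Real.cosh a / Real.sinh a * deriv φ1 a)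
      - (1/4 - α1 - α2 / Real.sinh a ^ 2) * φ1 a := by
    have := hode1 a ha; linarith
  have h2g : deriv (deriv φ2) b = -(α1 * φ2 b) := by have := hode2 b; linarith
  have h2k : deriv (deriv φ3) c = -(α2 * φ3 c) := by have := hode3 c; linarith
  rw [h2f, h2g, h2k]
  have hDb := hD1 b
  have hsb : 0 < Real.sqrt (Real.cosh a - Real.cos b) := Real.sqrt_pos.mpr hDb
  have hs2 : Real.sqrt (Real.cosh a - Real.cos b) ^ 2 = Real.cosh a - Real.cos b :=
    Real.sq_sqrt hDb.le
  have hch2 : Real.cosh a ^ 2 = Real.sinh a ^ 2 + 1 := Real.cosh_sq a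
  have hsc : Real.sin b ^ 2 + Real.cos b ^ 2 = 1 := Real.sin_sq_add_cos_sq b
  set S := Real.sqrt (Real.cosh a - Real.cos b) with hS
  clear_value S
  have hE : 4 * Real.cosh a * S ^ 2 + 2 * Real.cos b * S ^ 2 - 3 * Real.sinh a ^ 2
      - 3 * Real.sin b ^ 2 - S ^ 4 = 0 := by
    linear_combination (3 * Real.cosh a + 3 * Real.cos b - S ^ 2) * hs2 + 3 * hch2 - 3 * hsc
  have h0 : φ1 a * φ2 b * φ3 c * Real.sinh a / (4 * S ^ 5)
      * (4 * Real.cosh a * S ^ 2 + 2 * Real.cos b * S ^ 2 - 3 * Real.sinh a ^ 2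
        - 3 * Real.sin b ^ 2 - S ^ 4) = 0 := by rw [hE, mul_zero]
  rw [← h0]
  have hsne := hsb.ne'
  have hshne := hsh.ne'
  field_simp
  ring
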